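/- Suppose p, q, r : ℤ → ℝ satisfy r_{2n}=0, r_{2n+1}>0, q_{2n}=p_{2n}p_{2n+1}/r_{2n+1}, and define D_n = q_{2n-1}p_{2n-2}p_{2n+1} - p_{2n-2}p_{2n}r_{2n+1} - p_{2n-1}p_{2n+1}r_{2n-1}. If D_n ≠ 0 for all n, then the sequences ρ_{2n+1}=0, ρ_{2n} = r_{2n-1}r_{2n+1}/D_n, π_{2n+1} = -p_{2n+3}ρ_{2n+2}/r_{2n+3}, π_{2n} = -p_{2n-2}ρ_{2n}/r_{2n-1}, σ_{2n+1} = p_{2n}p_{2n+3}ρ_{2n+2}/(r_{2n+1}r_{2n+3}), together with the stated σ_{2n}, satisfy the diagonal equation of AA^{-1}=I: r_{n+2}ρ_{n+2} + p_{n+1}π_{n+1} + q_nσ_n + p_nπ_n + r_nρ_n = 1 for all n (Kronecker delta equation on the main diagonal). -/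

import Mathlib

set_option maxHeartbeats 2000000


theorem smp_inverse_main_diagonal_equation
    (p q r ρ π σ D : ℤ → ℝ)
    (hre : ∀ n : ℤ, r (2 * n) = 0) (hro : ∀ n : ℤ, 0 < r (2 * n + 1))
    (hq : ∀ n : ℤ, q (2 * n) = p (2 * n) * p (2 * n + 1) / r (2 * n + 1))
    (hD : ∀ n : ℤ, D n = q (2 * n - 1) * p (2 * n - 2) * p (2 * n + 1)
      - p (2 * n - 2) * p (2 * n) * r (2 * n + 1)
      - p (2 * n - 1) * p (2 * n + 1) * r (2 * n - 1))
    (hDne : ∀ n : ℤ, D n ≠ 0)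
    (hρo : ∀ n : ℤ, ρ (2 * n + 1) = 0)
    (hρe : ∀ n : ℤ, ρ (2 * n) = r (2 * n - 1) * r (2 * n + 1) / D n)
    (hπo : ∀ n : ℤ, π (2 * n + 1) = -(p (2 * n + 3) * ρ (2 * n + 2)) / r (2 * n + 3))
    (hπe : ∀ n : ℤ, π (2 * n) = -(p (2 * n - 2) * ρ (2 * n)) / r (2 * n - 1))
    (hσo : ∀ n : ℤ, σ (2 * n + 1) =
      p (2 * n) * p (2 * n + 3) * ρ (2 * n + 2) / (r (2 * n + 1) * r (2 * n + 3)))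
    (hp2 : ∀ n : ℤ, p (2 * n) ^ 2 + p (2 * n + 1) ^ 2 ≠ 0)
    (hσe : ∀ n : ℤ, σ (2 * n) =
      -(p (2 * n) * (π (2 * n + 1) * r (2 * n + 1) + q (2 * n - 1) * π (2 * n)
          + p (2 * n - 1) * ρ (2 * n))
        + p (2 * n + 1) * (π (2 * n) * r (2 * n + 1) + q (2 * n + 1) * π (2 * n + 1)
          + p (2 * n + 2) * ρ (2 * n + 2))) / (p (2 * n) ^ 2 + p (2 * n + 1) ^ 2)) :
    ∀ n : ℤ, r (n + 2) * ρ (n + 2) + p (n + 1) * π (n + 1) + q n * σ n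
      + p n * π n + r n * ρ n = 1 := by
  intro n
  -- useful nonzero facts at a shifted index m
  rcases Int.even_or_odd n with ⟨m, hm⟩ | ⟨m, hm⟩
  · -- n = 2 * m
    subst hm
    have e1 : m + m + 2 = 2 * (m + 1) := by ring
    have e2 : m + m = 2 * m := by ring
    have e3 : m + m + 1 = 2 * m + 1 := by ring
    rw [e1, e2, hre (m + 1), hre m, hσe m, hπo m, hπe m, hq m, hρe m,
      show (2 : ℤ) * m + 2 = 2 * (m + 1) by ring, hρe (m + 1), hD m, hD (m + 1)]
    have h1 : r (2 * m + 1) ≠ 0 := (hro m).ne'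
    have h2 : r (2 * m - 1) ≠ 0 := by
      have := (hro (m - 1)).ne'
      rwa [show (2 : ℤ) * (m - 1) + 1 = 2 * m - 1 by ring] at this
    have h3 : r (2 * m + 3) ≠ 0 := by
      have := (hro (m + 1)).ne'
      rwa [show (2 : ℤ) * (m + 1) + 1 = 2 * m + 3 by ring] at this
    have h4 : q (2 * m - 1) * p (2 * m - 2) * p (2 * m + 1)
        - p (2 * m - 2) * p (2 * m) * r (2 * m + 1)
        - p (2 * m - 1) * p (2 * m + 1) * r (2 * m - 1) ≠ 0 := (hD m) ▸ hDne m
    have h5 : q (2 * (m + 1) - 1) * p (2 * (m + 1) - 2) * p (2 * (m + 1) + 1)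
        - p (2 * (m + 1) - 2) * p (2 * (m + 1)) * r (2 * (m + 1) + 1)
        - p (2 * (m + 1) - 1) * p (2 * (m + 1) + 1) * r (2 * (m + 1) - 1) ≠ 0 :=
      (hD (m + 1)) ▸ hDne (m + 1)
    have h6 : p (2 * m) ^ 2 + p (2 * m + 1) ^ 2 ≠ 0 := hp2 m
    simp only [show (2 : ℤ) * (m + 1) - 1 = 2 * m + 1 by ring,
      show (2 : ℤ) * (m + 1) - 2 = 2 * m by ring,
      show (2 : ℤ) * (m + 1) + 1 = 2 * m + 3 by ring,
      show (2 : ℤ) * (m + 1) = 2 * m + 2 by ring,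
      show (2 : ℤ) * m + 2 - 1 = 2 * m + 1 by ring,
      show (2 : ℤ) * m + 2 - 2 = 2 * m by ring,
      show (2 : ℤ) * m + 2 + 1 = 2 * m + 3 by ring,
      show (2 : ℤ) * m + 2 + 2 = 2 * m + 4 by ring] at h5 ⊢
    generalize hd4 : (q (2 * m - 1) * p (2 * m - 2) * p (2 * m + 1)
        - p (2 * m - 2) * p (2 * m) * r (2 * m + 1)
        - p (2 * m - 1) * p (2 * m + 1) * r (2 * m - 1)) = d4 at h4 ⊢
    generalize hd5 : (q (2 * m + 1) * p (2 * m) * p (2 * m + 3)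
        - p (2 * m) * p (2 * m + 2) * r (2 * m + 3)
        - p (2 * m + 1) * p (2 * m + 3) * r (2 * m + 1)) = d5 at h5 ⊢
    field_simp
    subst hd4 hd5
    ring
  · -- n = 2 * m + 1
    subst hm
    have e1 : 2 * m + 1 + 2 = 2 * (m + 1) + 1 := by ring
    have e2 : 2 * m + 1 + 1 = 2 * (m + 1) := by ring
    rw [e1, e2, hρo (m + 1), hρo m, hπe (m + 1), hσo m, hπo m,
      show (2 : ℤ) * (m + 1) = 2 * m + 2 by ring,
      show (2 : ℤ) * m + 2 = 2 * (m + 1) by ring, hρe (m + 1), hD (m + 1)]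
    have h1 : r (2 * m + 1) ≠ 0 := (hro m).ne'
    have h3 : r (2 * m + 3) ≠ 0 := by
      have := (hro (m + 1)).ne'
      rwa [show (2 : ℤ) * (m + 1) + 1 = 2 * m + 3 by ring] at this
    have h5 : q (2 * (m + 1) - 1) * p (2 * (m + 1) - 2) * p (2 * (m + 1) + 1)
        - p (2 * (m + 1) - 2) * p (2 * (m + 1)) * r (2 * (m + 1) + 1)
        - p (2 * (m + 1) - 1) * p (2 * (m + 1) + 1) * r (2 * (m + 1) - 1) ≠ 0 :=
      (hD (m + 1)) ▸ hDne (m + 1)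
    simp only [show (2 : ℤ) * (m + 1) - 1 = 2 * m + 1 by ring,
      show (2 : ℤ) * (m + 1) - 2 = 2 * m by ring,
      show (2 : ℤ) * (m + 1) + 1 = 2 * m + 3 by ring,
      show (2 : ℤ) * (m + 1) = 2 * m + 2 by ring,
      show (2 : ℤ) * m + 2 - 1 = 2 * m + 1 by ring,
      show (2 : ℤ) * m + 2 - 2 = 2 * m by ring,
      show (2 : ℤ) * m + 2 + 1 = 2 * m + 3 by ring,
      show (2 : ℤ) * m + 2 + 2 = 2 * m + 4 by ring] at h5 ⊢
    generalize hd5 : (q (2 * m + 1) * p (2 * m) * p (2 * m + 3)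
        - p (2 * m) * p (2 * m + 2) * r (2 * m + 3)
        - p (2 * m + 1) * p (2 * m + 3) * r (2 * m + 1)) = d5 at h5 ⊢
    field_simp
    subst hd5
    ring
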